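/- Let {S_k : k ∈ ℕ} be Lebesgue-measurable subsets of (0,∞), each essentially unbounded in the measure sense (S_k ∩ (m,∞) of positive measure for all m). Then for almost every η > 0 and each k there exists an unbounded set J ⊆ ℚ ∩ (0,∞) with qη ∈ S_k for all q ∈ J. -/

import Mathlib

open MeasureTheory Filter Set Topology
open scoped ENNReal NNReal

lemma density_bound {S : Set ℝ} {x : ℝ}
    (h : Tendsto (fun r => volume (S ∩ Metric.closedBall x r) / volume (Metric.closedBall x r))
      (𝓝[>] 0) (𝓝 1)) :
    ∃ s₀ : ℝ, 0 < s₀ ∧ ∀ s : ℝ, 0 < s → s ≤ s₀ →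
      ENNReal.ofReal (3/4 * (2*s)) ≤ volume (S ∩ Metric.closedBall x s) := by
  have h34 : (ENNReal.ofReal (3/4) : ℝ≥0∞) < 1 := by
    rw [ENNReal.ofReal_lt_one]; norm_num
  have hev : ∀ᶠ s in 𝓝[>] (0:ℝ), ENNReal.ofReal (3/4) <
      volume (S ∩ Metric.closedBall x s) / volume (Metric.closedBall x s) :=
    h.eventually (eventually_gt_nhds h34)
  rw [eventually_iff, mem_nhdsGT_iff_exists_Ioc_subset] at hev
  obtain ⟨u, hu, hsub⟩ := hev
  refine ⟨u, hu, fun s hs0 hsu => ?_⟩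
  have hmem := hsub ⟨hs0, hsu⟩
  have hball : volume (Metric.closedBall x s) = ENNReal.ofReal (2*s) :=
    Real.volume_closedBall x s
  have hne0 : volume (Metric.closedBall x s) ≠ 0 := by
    rw [hball]; simp only [ne_eq, ENNReal.ofReal_eq_zero, not_le]; linarith
  have hnetop : volume (Metric.closedBall x s) ≠ ⊤ := by
    rw [hball]; exact ENNReal.ofReal_ne_top
  have hle := (ENNReal.le_div_iff_mul_le (Or.inl hne0) (Or.inl hnetop)).mp hmem.le
  calc ENNReal.ofReal (3/4 * (2*s)) = ENNReal.ofReal (3/4) * ENNReal.ofReal (2*s) := by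
        rw [← ENNReal.ofReal_mul]; norm_num
    _ = ENNReal.ofReal (3/4) * volume (Metric.closedBall x s) := by rw [hball]
    _ ≤ volume (S ∩ Metric.closedBall x s) := hle
lemma exists_density_point {S : Set ℝ} (hS : MeasurableSet S) (hpos : 0 < volume S) :
    ∃ x ∈ S, Tendsto (fun r => volume (S ∩ Metric.closedBall x r) / volume (Metric.closedBall x r))
      (𝓝[>] 0) (𝓝 1) := by
  have h1 := Besicovitch.ae_tendsto_measure_inter_div volume S
  have h2 : ∀ᵐ x ∂(volume.restrict S), x ∈ S := ae_restrict_mem hS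
  have hne : (volume.restrict S) ≠ 0 := by
    simpa [Measure.restrict_eq_zero] using hpos.ne'
  have : (ae (volume.restrict S)).NeBot := ae_neBot.mpr hne
  exact (h2.and h1).exists

lemma kingman_key (A : Set ℝ) (hA : MeasurableSet A) (hsub : A ⊆ Set.Ioi 0)
    (hpos : 0 < volume A) :
    volume {x : ℝ | 0 < x ∧ ∀ q : ℚ, 0 < q → (q:ℝ)*x ∉ A} = 0 := by
  set B := {x : ℝ | 0 < x ∧ ∀ q : ℚ, 0 < q → (q:ℝ)*x ∉ A} with hBdef
  have hBmeas : MeasurableSet B := by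
    have : B = Set.Ioi 0 ∩ ⋂ (q : ℚ), ⋂ (_ : 0 < q), (fun x => (q:ℝ)*x) ⁻¹' Aᶜ := by
      ext x
      simp only [hBdef, Set.mem_setOf_eq, Set.mem_inter_iff, Set.mem_Ioi, Set.mem_iInter,
        Set.mem_preimage, Set.mem_compl_iff]
    rw [this]
    exact measurableSet_Ioi.inter (MeasurableSet.iInter fun q => MeasurableSet.iInter fun _ =>
      hA.compl.preimage (measurable_const_mul _))
  by_contra hB0
  have hBpos : 0 < volume B := pos_iff_ne_zero.mpr hB0
  obtain ⟨a, haA, ha_t⟩ := exists_density_point hA hpos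
  obtain ⟨b, hbB, hb_t⟩ := exists_density_point hBmeas hBpos
  have ha0 : (0:ℝ) < a := hsub haA
  obtain ⟨hb0, hbq⟩ := hbB
  obtain ⟨sA, hsA0, H_A⟩ := density_bound ha_t
  obtain ⟨sB, hsB0, H_B⟩ := density_bound hb_t
  set r := min (min sB b) (sA * b / (2*a)) with hrdef
  have hr0 : 0 < r := lt_min (lt_min hsB0 hb0) (by positivity)
  have hrb : r ≤ b := le_trans (min_le_left _ _) (min_le_right _ _)
  have hrsB : r ≤ sB := le_trans (min_le_left _ _) (min_le_left _ _)
  have hr3 : r ≤ sA * b / (2*a) := min_le_right _ _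
  have h4 : (0:ℝ) < b - r/4 := by linarith
  have hiv : a / b < a / (b - r/4) := div_lt_div_of_pos_left ha0 h4 (by linarith)
  obtain ⟨q, hq1, hq2⟩ := exists_rat_btwn hiv
  have hq0R : (0:ℝ) < (q:ℝ) := lt_trans (by positivity) hq1
  have hq0Q : (0:ℚ) < q := by exact_mod_cast hq0R
  set b' := a / (q:ℝ) with hb'def
  have hb'b : b' < b := by
    rw [hb'def, div_lt_iff₀ hq0R]
    have := (div_lt_iff₀ hb0).mp hq1
    linarith [mul_comm (q:ℝ) b]
  have hb'lb : b - r/4 < b' := by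
    rw [hb'def, lt_div_iff₀ hq0R]
    have := (lt_div_iff₀ h4).mp hq2
    linarith [mul_comm (q:ℝ) (b - r/4)]
  have hqle : (q:ℝ) * r ≤ sA := by
    have h1 : (q:ℝ) * (b - r/4) < a := (lt_div_iff₀ h4).mp hq2
    have h2 : 2 * a * r ≤ sA * b := by
      rw [le_div_iff₀ (by positivity : (0:ℝ) < 2*a)] at hr3
      nlinarith [hr3]
    nlinarith [hq0R, hr0, ha0, hb0, hsA0]
  -- the scaled set
  set C := (fun x => (q:ℝ)*x) ⁻¹' A with hCdef
  have hkey : ∀ x : ℝ, |(q:ℝ)*x - a| ≤ (q:ℝ)*(3/4*r) ↔ |x - b'| ≤ 3/4*r := by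
    intro x
    rw [show (q:ℝ)*x - a = (q:ℝ)*(x - b') by rw [hb'def]; field_simp,
      abs_mul, abs_of_pos hq0R, mul_le_mul_iff_right₀ hq0R]
  have hCset : C ∩ Metric.closedBall b' (3/4*r)
      = (fun x => (q:ℝ)*x) ⁻¹' (A ∩ Metric.closedBall a ((q:ℝ)*(3/4*r))) := by
    ext x
    simp only [hCdef, Set.mem_inter_iff, Set.mem_preimage, Metric.mem_closedBall, Real.dist_eq]
    rw [hkey x]
  have hC_bound : ENNReal.ofReal (9/16 * (2*r)) ≤ volume (C ∩ Metric.closedBall b' (3/4*r)) := by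
    rw [hCset, Real.volume_preimage_mul_left (ne_of_gt hq0R)]
    have hsle : (q:ℝ)*(3/4*r) ≤ sA := by nlinarith
    have := H_A ((q:ℝ)*(3/4*r)) (by positivity) hsle
    calc ENNReal.ofReal (9/16 * (2*r))
        = ENNReal.ofReal |((q:ℝ))⁻¹| * ENNReal.ofReal (3/4 * (2*((q:ℝ)*(3/4*r)))) := by
          rw [abs_of_pos (inv_pos.mpr hq0R), ← ENNReal.ofReal_mul (by positivity)]
          congr 1
          field_simp
          ring
      _ ≤ ENNReal.ofReal |((q:ℝ))⁻¹| * volume (A ∩ Metric.closedBall a ((q:ℝ)*(3/4*r))) :=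
          mul_le_mul_right this _
  have hB_bound : ENNReal.ofReal (3/4 * (2*r)) ≤ volume (B ∩ Metric.closedBall b r) :=
    H_B r hr0 hrsB
  have hdisj : Disjoint (B ∩ Metric.closedBall b r) (C ∩ Metric.closedBall b' (3/4*r)) := by
    rw [Set.disjoint_left]
    rintro x ⟨hxB, -⟩ ⟨hxC, -⟩
    exact hxB.2 q hq0Q hxC
  have hD2meas : MeasurableSet (C ∩ Metric.closedBall b' (3/4*r)) :=
    (hA.preimage (measurable_const_mul _)).inter Metric.isClosed_closedBall.measurableSet
  have hdist : dist b' b ≤ r/4 := by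
    rw [Real.dist_eq, abs_le]; constructor <;> linarith
  have hsub2 : C ∩ Metric.closedBall b' (3/4*r) ⊆ Metric.closedBall b r := by
    refine Set.inter_subset_right.trans (Metric.closedBall_subset_closedBall' ?_)
    linarith
  have hfinal : ENNReal.ofReal (3/4*(2*r)) + ENNReal.ofReal (9/16*(2*r))
      ≤ ENNReal.ofReal (2*r) := by
    calc ENNReal.ofReal (3/4*(2*r)) + ENNReal.ofReal (9/16*(2*r))
        ≤ volume (B ∩ Metric.closedBall b r) + volume (C ∩ Metric.closedBall b' (3/4*r)) :=
          add_le_add hB_bound hC_bound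
      _ = volume ((B ∩ Metric.closedBall b r) ∪ (C ∩ Metric.closedBall b' (3/4*r))) :=
          (measure_union hdisj hD2meas).symm
      _ ≤ volume (Metric.closedBall b r) :=
          measure_mono (Set.union_subset Set.inter_subset_right hsub2)
      _ = ENNReal.ofReal (2*r) := Real.volume_closedBall b r
  rw [← ENNReal.ofReal_add (by positivity) (by positivity),
    ENNReal.ofReal_le_ofReal_iff (by positivity)] at hfinal
  linarith

theorem stmt_11 (S : ℕ → Set ℝ) (hS₀ : ∀ k, S k ⊆ Ioi 0)
    (hS : ∀ k, MeasurableSet (S k))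
    (hUnb : ∀ k, ∀ m : ℕ, 0 < volume (S k ∩ Ioi (m : ℝ))) :
    ∃ N : Set ℝ, volume N = 0 ∧ ∀ η : ℝ, 0 < η → η ∉ N → ∀ k : ℕ,
      ∃ J : Set ℚ, (∀ q ∈ J, 0 < q) ∧ (∀ r : ℚ, ∃ q ∈ J, r ≤ q) ∧
        ∀ q ∈ J, (q : ℝ) * η ∈ S k := by
  refine ⟨⋃ (k : ℕ), ⋃ (m : ℕ),
    {x : ℝ | 0 < x ∧ ∀ q : ℚ, 0 < q → (q:ℝ)*x ∉ S k ∩ Ioi (m:ℝ)}, ?_, ?_⟩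
  · refine measure_iUnion_null fun k => measure_iUnion_null fun m => ?_
    exact kingman_key _ ((hS k).inter measurableSet_Ioi)
      (Set.inter_subset_left.trans (hS₀ k)) (hUnb k m)
  · intro η hη hηN k
    refine ⟨{q : ℚ | 0 < q ∧ (q:ℝ)*η ∈ S k}, fun q hq => hq.1, ?_, fun q hq => hq.2⟩
    intro r
    obtain ⟨M, hM⟩ := exists_nat_gt η
    set n : ℕ := ⌈r⌉.toNat with hn
    have hηm : η ∉ {x : ℝ | 0 < x ∧ ∀ q : ℚ, 0 < q → (q:ℝ)*x ∉ S k ∩ Ioi ((n*M : ℕ):ℝ)} := by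
      intro h
      exact hηN (Set.mem_iUnion.mpr ⟨k, Set.mem_iUnion.mpr ⟨n*M, h⟩⟩)
    simp only [Set.mem_setOf_eq, not_and, not_forall] at hηm
    obtain ⟨q, hq0, hqmem⟩ := hηm hη
    rw [not_not] at hqmem
    refine ⟨q, ⟨hq0, hqmem.1⟩, ?_⟩
    have hqIoi : ((n*M : ℕ):ℝ) < (q:ℝ)*η := hqmem.2
    have hnη : ((n:ℕ):ℝ) * η ≤ ((n:ℕ):ℝ) * (M:ℝ) := by
      apply mul_le_mul_of_nonneg_left hM.le (by positivity)
    have hq_gt_n : ((n:ℕ):ℝ) < (q:ℝ) := by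
      have h1 : ((n:ℕ):ℝ) * η < (q:ℝ) * η := by
        push_cast at hqIoi ⊢
        nlinarith
      exact lt_of_mul_lt_mul_right h1 hη.le
    have hq_gt_nQ : ((n:ℕ):ℚ) < q := by exact_mod_cast hq_gt_n
    have hrn : r ≤ ((n:ℕ):ℚ) := by
      calc r ≤ (⌈r⌉ : ℚ) := Int.le_ceil r
        _ ≤ ((⌈r⌉.toNat : ℤ) : ℚ) := by exact_mod_cast Int.self_le_toNat ⌈r⌉
        _ = ((n:ℕ):ℚ) := by rw [hn]; push_cast; ring
    exact le_of_lt (lt_of_le_of_lt hrn hq_gt_nQ)
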